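/- For every symmetric system T, the map sending s ∈ T to the bijection s^𝒯: T → T, t ↦ s.t, lands in the symmetric group of T; the subgroup 𝒯 generated by these maps, with the natural action on T, is a T-reflection group, and it is terminal: every T-reflection group admits a unique reflection morphism to 𝒯. -/
import Mathlib


/-- A symmetric system: a set with a multiplication satisfying (S1) and (S2). -/
structure SymmetricSystem (T : Type*) where
  mul : T → T → T
  s1 : ∀ s t : T, mul s (mul s t) = t
  s2 : ∀ r s t : T, mul r (mul s t) = mul (mul r s) (mul r t)

/-- A `T`-reflection group: a group `X` acting on `T` together with a map `t ↦ t^X`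
satisfying axioms (G1)-(G4). -/
structure ReflectionGroup {T : Type*} (S : SymmetricSystem T) (X : Type*) [Group X] where
  act : X → T → T
  act_one : ∀ t : T, act 1 t = t
  act_mul : ∀ x y : X, ∀ t : T, act (x * y) t = act x (act y t)
  refl : T → X
  g1 : Subgroup.closure (Set.range refl) = ⊤
  g2 : ∀ s t : T, act (refl t) s = S.mul t s
  g3 : ∀ s t : T, refl t * refl s * (refl t)⁻¹ = refl (S.mul t s)
  g4 : ∀ t : T, refl t * refl t = 1

/-- For `s ∈ T`, the map `t ↦ s.t` is a bijection of `T` (by (S1)). -/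
def SymmetricSystem.perm {T : Type*} (S : SymmetricSystem T) (s : T) : Equiv.Perm T :=
  Function.Involutive.toPerm (S.mul s) (fun t => S.s1 s t)

/-- The terminal reflection group: the subgroup of the symmetric group of `T` generated by
the maps `t ↦ s.t`. -/
def SymmetricSystem.terminal {T : Type*} (S : SymmetricSystem T) : Subgroup (Equiv.Perm T) :=
  Subgroup.closure (Set.range S.perm)

lemma SymmetricSystem.perm_apply {T : Type*} (S : SymmetricSystem T) (s t : T) :
    S.perm s t = S.mul s t := rfl

lemma SymmetricSystem.perm_mem {T : Type*} (S : SymmetricSystem T) (s : T) :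
    S.perm s ∈ S.terminal := Subgroup.subset_closure ⟨s, rfl⟩

/-- The reflections in the terminal group. -/
def SymmetricSystem.terminalRefl {T : Type*} (S : SymmetricSystem T) (s : T) : S.terminal :=
  ⟨S.perm s, S.perm_mem s⟩

lemma SymmetricSystem.perm_inv {T : Type*} (S : SymmetricSystem T) (s : T) :
    (S.perm s)⁻¹ = S.perm s := by
  rfl

/-- The terminal reflection-group structure. -/
def SymmetricSystem.terminalRG {T : Type*} (S : SymmetricSystem T) :
    ReflectionGroup S S.terminal where
  act x t := (x : Equiv.Perm T) t
  act_one t := rfl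
  act_mul x y t := rfl
  refl := S.terminalRefl
  g1 := by
    have h : Set.range S.terminalRefl =
        ((↑) : S.terminal → Equiv.Perm T) ⁻¹' (Set.range S.perm) := by
      ext x
      constructor
      · rintro ⟨s, rfl⟩; exact ⟨s, rfl⟩
      · rintro ⟨s, hs⟩
        exact ⟨s, Subtype.ext hs⟩
    rw [h]
    exact Subgroup.closure_closure_coe_preimage
  g2 s t := rfl
  g3 s t := by
    apply Subtype.ext
    show S.perm t * S.perm s * (S.perm t)⁻¹ = S.perm (S.mul t s)
    rw [S.perm_inv]
    ext u
    show S.mul t (S.mul s (S.mul t u)) = S.mul (S.mul t s) u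
    rw [S.s2 t s (S.mul t u), S.s1 t u]
  g4 t := by
    apply Subtype.ext
    show S.perm t * S.perm t = 1
    ext u
    exact S.s1 t u

/-- The subgroup of `Sym T` generated by the maps `t ↦ s.t`, with the natural action on `T`,
is a `T`-reflection group, and it is terminal: every `T`-reflection group has a unique
reflection morphism to it. -/
theorem terminal_reflectionGroup
    {T : Type*} (S : SymmetricSystem T) :
    ∃ R : ReflectionGroup S S.terminal,
      (∀ s : T, (R.refl s : Equiv.Perm T) = S.perm s) ∧
      (∀ x : S.terminal, ∀ t : T, R.act x t = (x : Equiv.Perm T) t) ∧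
      (∀ (X : Type*) [Group X] (RX : ReflectionGroup S X),
        ∃! φ : X →* S.terminal, ∀ t : T, φ (RX.refl t) = R.refl t) := by
  refine ⟨S.terminalRG, fun s => rfl, fun x t => rfl, ?_⟩
  intro X _ RX
  -- the action of X on T as a homomorphism to Perm T
  have act_inv : ∀ (x : X) (t : T), RX.act x (RX.act x⁻¹ t) = t := fun x t => by
    rw [← RX.act_mul, mul_inv_cancel, RX.act_one]
  have act_inv' : ∀ (x : X) (t : T), RX.act x⁻¹ (RX.act x t) = t := fun x t => by
    rw [← RX.act_mul, inv_mul_cancel, RX.act_one]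
  let ψ : X →* Equiv.Perm T :=
    { toFun := fun x => ⟨RX.act x, RX.act x⁻¹, act_inv' x, act_inv x⟩
      map_one' := by ext t; exact RX.act_one t
      map_mul' := fun x y => by ext t; exact RX.act_mul x y t }
  have hψrefl : ∀ t : T, ψ (RX.refl t) = S.perm t := fun t => by
    ext u; exact RX.g2 u t
  have hmem : ∀ x : X, ψ x ∈ S.terminal := by
    intro x
    have hx : x ∈ Subgroup.closure (Set.range RX.refl) := by
      rw [RX.g1]; trivial
    refine Subgroup.closure_induction (p := fun g _ => ψ g ∈ S.terminal)
      ?_ ?_ ?_ ?_ hx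
    · rintro g ⟨t, rfl⟩
      rw [hψrefl]; exact S.perm_mem t
    · simp [Subgroup.one_mem]
    · intro a b _ _ ha hb; rw [map_mul]; exact mul_mem ha hb
    · intro a _ ha; rw [map_inv]; exact inv_mem ha
  refine ⟨ψ.codRestrict S.terminal hmem, fun t => Subtype.ext (hψrefl t), ?_⟩
  intro φ hφ
  refine MonoidHom.ext fun x => ?_
  have hx : x ∈ Subgroup.closure (Set.range RX.refl) := by
    rw [RX.g1]; trivial
  refine Subgroup.closure_induction
    (p := fun g _ => φ g = (ψ.codRestrict S.terminal hmem) g) ?_ ?_ ?_ ?_ hx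
  · rintro g ⟨t, rfl⟩
    rw [hφ t]
    exact Subtype.ext (hψrefl t).symm
  · show φ 1 = _; rw [map_one, map_one]
  · intro a b _ _ ha hb; rw [map_mul, map_mul, ha, hb]
  · intro a _ ha; rw [map_inv, map_inv, ha]
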